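/- arXiv:1211.1197 — 4 statements merged into one kernel-verified Lean document; each statement's English description precedes it below -/
import Mathlib

section
/- Let θ₀ ∈ ℝ^n satisfy the weak ℓ_s-ball condition: max_{1≤i≤n} i·|θ_{[i]}|^s ≤ n(p_n/n)^s, where θ_{[1]} ≥ θ_{[2]} ≥ ⋯ are the sorted absolute values of coordinates and 0 < s < 2. Let θ₁ be obtained from θ₀ by keeping its p* largest coordinates (in absolute value) and setting the rest to zero. Then ‖θ₁ − θ₀‖² ≤ (p_n/n)² · (s/(2−s)) · n^{2/s} · (p*)^{1−2/s}. -/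
open Finset


lemma aux_bern (t r : ℝ) (ht0 : 0 ≤ t) (ht1 : t ≤ 1) (hr : 0 ≤ r) :
    (1 - t) ^ r * (1 + r * t) ≤ 1 := by
  rcases le_or_gt r 1 with hr1 | hr1
  · have h1 : (1 - t) ^ r ≤ 1 - r * t := by
      have := rpow_one_add_le_one_add_mul_self (s := -t) (by linarith) hr hr1
      simpa [sub_eq_add_neg, mul_neg] using this
    have h0 : (0:ℝ) ≤ (1 - t) ^ r := Real.rpow_nonneg (by linarith) r
    nlinarith [sq_nonneg (r * t), mul_nonneg hr ht0]
  · have h1 : 1 + r * t ≤ (1 + t) ^ r := one_add_mul_self_le_rpow_one_add (by linarith) hr1.le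
    have h0 : (0:ℝ) ≤ (1 - t) ^ r := Real.rpow_nonneg (by linarith) r
    calc (1 - t) ^ r * (1 + r * t) ≤ (1 - t) ^ r * (1 + t) ^ r := by
          apply mul_le_mul_of_nonneg_left h1 h0
      _ = ((1 - t) * (1 + t)) ^ r := (Real.mul_rpow (by linarith) (by linarith)).symm
      _ ≤ 1 := Real.rpow_le_one (by nlinarith) (by nlinarith) (by linarith)

lemma key_ineq (b p : ℝ) (hb : 2 ≤ b) (hp : 1 < p) :
    (p - 1) * b ^ (-p) ≤ (b - 1) ^ (1 - p) - b ^ (1 - p) := by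
  have hb0 : (0:ℝ) < b := by linarith
  have hb1 : (0:ℝ) < b - 1 := by linarith
  have haux := aux_bern (1 / b) (p - 1) (by positivity) (by rw [div_le_one hb0]; linarith)
    (by linarith)
  have h1mt : (1 : ℝ) - 1 / b = (b - 1) / b := by field_simp
  rw [h1mt, Real.div_rpow hb1.le hb0.le] at haux
  have hA : (0:ℝ) < (b - 1) ^ (p - 1) := Real.rpow_pos_of_pos hb1 _
  have hB1 : (0:ℝ) < b ^ (p - 1) := Real.rpow_pos_of_pos hb0 _
  have e1 : 1 + (p - 1) * (1 / b) = (b + p - 1) / b := by field_simp; ring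
  rw [e1, div_mul_div_comm, div_le_one (by positivity)] at haux
  have hgoalA : (b - 1) ^ (1 - p) = ((b - 1) ^ (p - 1))⁻¹ := by
    rw [show (1:ℝ) - p = -(p - 1) by ring, Real.rpow_neg hb1.le]
  have hgoalB : b ^ (1 - p) = (b ^ (p - 1))⁻¹ := by
    rw [show (1:ℝ) - p = -(p - 1) by ring, Real.rpow_neg hb0.le]
  have hgoalC : b ^ (-p) = (b ^ (p - 1) * b)⁻¹ := by
    rw [Real.rpow_neg hb0.le, ← Real.rpow_add_one hb0.ne' (p - 1)]; ring_nf
  rw [hgoalA, hgoalB, hgoalC, le_sub_iff_add_le]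
  calc (p - 1) * (b ^ (p - 1) * b)⁻¹ + (b ^ (p - 1))⁻¹
      = (b + p - 1) / (b ^ (p - 1) * b) := by field_simp; ring
    _ ≤ ((b - 1) ^ (p - 1))⁻¹ := by
        rw [div_le_iff₀ (mul_pos hB1 hb0), inv_mul_eq_div, le_div_iff₀ hA]
        nlinarith


/-- Projection error bound for weak ℓ_s-balls: keeping the `p*` largest coordinates. -/
theorem weak_ball_projection {n : ℕ} (θ₀ : Fin n → ℝ) (pn : ℕ) (s : ℝ)
    (hs0 : 0 < s) (hs2 : s < 2) (pstar : ℕ) (hpstar1 : 1 ≤ pstar) (hpstarn : pstar ≤ n)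
    (e : Equiv.Perm (Fin n))
    (hsort : ∀ i j : Fin n, i ≤ j → |θ₀ (e j)| ≤ |θ₀ (e i)|)
    (hweak : ∀ i : Fin n, ((i : ℝ) + 1) * |θ₀ (e i)| ^ s ≤ (n : ℝ) * ((pn : ℝ) / n) ^ s)
    (θ₁ : Fin n → ℝ)
    (hθ₁ : θ₁ = fun j => if ((e.symm j : ℕ) < pstar) then θ₀ j else 0) :
    ∑ i, (θ₁ i - θ₀ i) ^ 2 ≤
      ((pn : ℝ) / n) ^ 2 * (s / (2 - s)) * (n : ℝ) ^ (2 / s)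
        * (pstar : ℝ) ^ (1 - 2 / s) := by
  have hs2' : (0:ℝ) < 2 - s := by linarith
  have hp1 : 1 < 2 / s := (one_lt_div hs0).mpr hs2
  set p : ℝ := 2 / s with hpdef
  set C : ℝ := ((pn : ℝ) / n) ^ 2 * (n : ℝ) ^ p with hCdef
  have hC0 : 0 ≤ C := by positivity
  -- Step 1: rewrite the sum via the permutation
  have h1 : ∑ i, (θ₁ i - θ₀ i) ^ 2 = ∑ i : Fin n, (θ₁ (e i) - θ₀ (e i)) ^ 2 :=
    (Equiv.sum_comp e _).symm
  -- Step 2: per-term bound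
  have hterm : ∀ i : Fin n, (θ₁ (e i) - θ₀ (e i)) ^ 2
      ≤ if ((i : ℕ) < pstar) then 0 else C * (((i : ℕ) : ℝ) + 1) ^ (-p) := by
    intro i
    subst hθ₁
    simp only [Equiv.symm_apply_apply]
    split_ifs with h
    · simp
    · have hx : (θ₀ (e i) - θ₀ (e i) * 0 - θ₀ (e i)) ^ 2 = 0 := by ring
      have hb : (0:ℝ) < ((i : ℕ) : ℝ) + 1 := by positivity
      have hwk := hweak i
      have hx1 : |θ₀ (e i)| ^ s ≤ (n : ℝ) * ((pn : ℝ) / n) ^ s / (((i : ℕ) : ℝ) + 1) := by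
        rw [le_div_iff₀ hb]; linarith [hwk]
      have hx2 := Real.rpow_le_rpow (Real.rpow_nonneg (abs_nonneg _) s) hx1 (by positivity : (0:ℝ) ≤ p)
      have hsp : s * p = ((2:ℕ):ℝ) := by
        rw [hpdef]; push_cast; field_simp
      have hL : (|θ₀ (e i)| ^ s) ^ p = θ₀ (e i) ^ 2 := by
        rw [← Real.rpow_mul (abs_nonneg _), hsp, Real.rpow_natCast, sq_abs]
      have hR : ((n : ℝ) * ((pn : ℝ) / n) ^ s / (((i : ℕ) : ℝ) + 1)) ^ p
          = C * (((i : ℕ) : ℝ) + 1) ^ (-p) := by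
        rw [Real.div_rpow (by positivity) hb.le,
          Real.mul_rpow (by positivity) (by positivity),
          ← Real.rpow_mul (by positivity : (0:ℝ) ≤ (pn : ℝ) / n), hsp,
          Real.rpow_natCast, Real.rpow_neg hb.le, hCdef]
        ring
      rw [hL, hR] at hx2
      calc (0 - θ₀ (e i)) ^ 2 = θ₀ (e i) ^ 2 := by ring
        _ ≤ C * (((i : ℕ) : ℝ) + 1) ^ (-p) := hx2
  -- Step 3: tail sum bound
  have htail : ∑ k ∈ Ico pstar n, ((k : ℝ) + 1) ^ (-p) ≤ (pstar : ℝ) ^ (1 - p) / (p - 1) := by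
    have hstep : ∀ k ∈ Ico pstar n,
        ((k : ℝ) + 1) ^ (-p) ≤ ((k : ℝ) ^ (1 - p) - ((k : ℝ) + 1) ^ (1 - p)) / (p - 1) := by
      intro k hk
      obtain ⟨hk1, _⟩ := mem_Ico.mp hk
      have hk1' : (1 : ℝ) ≤ (k : ℝ) := by
        have : 1 ≤ k := le_trans hpstar1 hk1
        exact_mod_cast this
      have hkey := key_ineq ((k : ℝ) + 1) p (by linarith) hp1
      rw [show (k : ℝ) + 1 - 1 = (k : ℝ) by ring] at hkey
      rw [le_div_iff₀ (by linarith : (0:ℝ) < p - 1)]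
      linarith
    calc ∑ k ∈ Ico pstar n, ((k : ℝ) + 1) ^ (-p)
        ≤ ∑ k ∈ Ico pstar n, ((k : ℝ) ^ (1 - p) - ((k : ℝ) + 1) ^ (1 - p)) / (p - 1) :=
          Finset.sum_le_sum hstep
      _ = (∑ k ∈ Ico pstar n, (((k : ℕ) : ℝ) ^ (1 - p) - (((k + 1 : ℕ)) : ℝ) ^ (1 - p))) / (p - 1) := by
          rw [← Finset.sum_div]
          congr 1
          apply Finset.sum_congr rfl
          intro k _
          push_cast
          ring_nf
      _ ≤ (pstar : ℝ) ^ (1 - p) / (p - 1) := by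
          have htel : (∑ k ∈ Ico pstar n, (((k:ℕ):ℝ) ^ (1-p) - (((k+1:ℕ)):ℝ) ^ (1-p)))
              ≤ (pstar : ℝ) ^ (1 - p) := by
            rw [Finset.sum_Ico_eq_sum_range]
            have hts := Finset.sum_range_sub' (fun j => (((pstar + j : ℕ)) : ℝ) ^ (1 - p))
              (n - pstar)
            have heq : ∑ k ∈ range (n - pstar),
                ((((pstar + k : ℕ)):ℝ) ^ (1-p) - (((pstar + k + 1:ℕ)):ℝ) ^ (1-p))
                = ∑ i ∈ range (n - pstar),
                  ((fun j => (((pstar + j : ℕ)) : ℝ) ^ (1 - p)) i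
                    - (fun j => (((pstar + j : ℕ)) : ℝ) ^ (1 - p)) (i + 1)) := by
              apply Finset.sum_congr rfl
              intro k _
              norm_num [Nat.add_assoc]
            rw [heq, hts]
            have h0 : (0:ℝ) ≤ (((pstar + (n - pstar) : ℕ)) : ℝ) ^ (1 - p) :=
              Real.rpow_nonneg (by positivity) _
            simp only [Nat.add_zero]
            linarith
          gcongr
  -- Step 4: assemble
  calc ∑ i, (θ₁ i - θ₀ i) ^ 2
      = ∑ i : Fin n, (θ₁ (e i) - θ₀ (e i)) ^ 2 := h1
    _ ≤ ∑ i : Fin n, (if ((i : ℕ) < pstar) then 0 else C * (((i : ℕ) : ℝ) + 1) ^ (-p)) :=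
        Finset.sum_le_sum fun i _ => hterm i
    _ = ∑ k ∈ range n, (if (k < pstar) then 0 else C * ((k : ℝ) + 1) ^ (-p)) :=
        Fin.sum_univ_eq_sum_range (fun k => if (k < pstar) then (0:ℝ) else C * ((k : ℝ) + 1) ^ (-p)) n
    _ = ∑ k ∈ Ico pstar n, C * ((k : ℝ) + 1) ^ (-p) := by
        rw [range_eq_Ico, ← Finset.sum_Ico_consecutive _ (Nat.zero_le pstar) hpstarn]
        have hz : ∑ k ∈ Ico 0 pstar, (if (k < pstar) then (0:ℝ) else C * ((k : ℝ) + 1) ^ (-p)) = 0 := by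
          apply Finset.sum_eq_zero
          intro k hk
          rw [if_pos (mem_Ico.mp hk).2]
        rw [hz, zero_add]
        apply Finset.sum_congr rfl
        intro k hk
        rw [if_neg (by exact Nat.not_lt.mpr (mem_Ico.mp hk).1)]
    _ = C * ∑ k ∈ Ico pstar n, ((k : ℝ) + 1) ^ (-p) := by rw [Finset.mul_sum]
    _ ≤ C * ((pstar : ℝ) ^ (1 - p) / (p - 1)) := by
        apply mul_le_mul_of_nonneg_left htail hC0
    _ = ((pn : ℝ) / n) ^ 2 * (s / (2 - s)) * (n : ℝ) ^ p * (pstar : ℝ) ^ (1 - p) := by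
        rw [hCdef]
        rw [show p - 1 = (2 - s) / s by rw [hpdef]; field_simp]
        field_simp
end

section
/- Let Π be a probability measure on ℝ^n, θ₀ ∈ ℝ^n, r > 0, and X ~ N(θ₀, I_n). Then with probability at least 1 − exp(−r²/8), one has ∫ (p_{n,θ}/p_{n,θ₀})(X) dΠ(θ) ≥ exp(−r²) · Π({θ : ‖θ − θ₀‖ < r}). -/
open MeasureTheory Real
open scoped RealInnerProductSpace

/-- The density of `N(θ, I_n)` on `ℝ^n`. -/
noncomputable def gaussDensity {n : ℕ} (θ x : EuclideanSpace ℝ (Fin n)) : ℝ :=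
  (2 * Real.pi) ^ (-(n : ℝ) / 2) * Real.exp (-‖x - θ‖ ^ 2 / 2)

/-- The Gaussian measure `N(θ, I_n)` on `ℝ^n`, as `volume` with the Gaussian density. -/
noncomputable def gaussMeasure {n : ℕ} (θ : EuclideanSpace ℝ (Fin n)) :
    Measure (EuclideanSpace ℝ (Fin n)) :=
  volume.withDensity (fun x => ENNReal.ofReal (gaussDensity θ x))

lemma gaussDensity_pos {n : ℕ} (θ x : EuclideanSpace ℝ (Fin n)) : 0 < gaussDensity θ x := by
  unfold gaussDensity
  positivity

lemma gaussDensity_continuous {n : ℕ} (θ : EuclideanSpace ℝ (Fin n)) :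
    Continuous (gaussDensity θ) := by
  unfold gaussDensity
  fun_prop

lemma gaussDensity_integrable {n : ℕ} (θ : EuclideanSpace ℝ (Fin n)) :
    Integrable (gaussDensity θ) := by
  have h0 : Integrable (fun v : EuclideanSpace ℝ (Fin n) =>
      Complex.exp (-(1/2 : ℂ) * (‖v‖:ℂ)^2)) := by
    simpa using GaussianFourier.integrable_cexp_neg_mul_sq_norm_add (V := EuclideanSpace ℝ (Fin n))
      (b := (1/2 : ℂ)) (by norm_num) 0 0
  have h1 : Integrable (fun v : EuclideanSpace ℝ (Fin n) => rexp (-‖v‖^2/2)) := by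
    have := h0.norm
    convert this using 2 with v
    rw [Complex.norm_exp,
      show (-(1/2:ℂ) * (‖v‖:ℂ)^2) = ((-‖v‖^2/2 : ℝ) : ℂ) by push_cast; ring,
      Complex.ofReal_re]
  have h2 : Integrable (fun x : EuclideanSpace ℝ (Fin n) => rexp (-‖x - θ‖^2/2)) := by
    exact ((measurePreserving_sub_right volume θ).integrable_comp
      h1.aestronglyMeasurable).mpr h1
  exact h2.const_mul _

lemma gaussDensity_integral {n : ℕ} (θ : EuclideanSpace ℝ (Fin n)) :
    ∫ x, gaussDensity θ x = 1 := by
  unfold gaussDensity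
  rw [integral_const_mul]
  have h1 : ∫ x : EuclideanSpace ℝ (Fin n), rexp (-‖x - θ‖^2/2)
      = ∫ x : EuclideanSpace ℝ (Fin n), rexp (-‖x‖^2/2) :=
    integral_sub_right_eq_self (fun x => rexp (-‖x‖^2/2)) θ
  have h2 : ∫ x : EuclideanSpace ℝ (Fin n), rexp (-‖x‖^2/2)
      = (2 * π) ^ ((n : ℝ)/2) := by
    have := GaussianFourier.integral_rexp_neg_mul_sq_norm (V := EuclideanSpace ℝ (Fin n))
      (b := (1/2 : ℝ)) (by norm_num)
    simp only [finrank_euclideanSpace_fin] at this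
    rw [show ((2:ℝ) * π) = π / (1/2) by ring, ← this]
    congr 1 with x
    congr 1
    ring
  rw [h1, h2, ← Real.rpow_add (by positivity),
    show (-(n:ℝ)/2 + (n:ℝ)/2) = 0 by ring, Real.rpow_zero]

instance gaussMeasure_prob {n : ℕ} (θ : EuclideanSpace ℝ (Fin n)) :
    IsProbabilityMeasure (gaussMeasure θ) := by
  constructor
  rw [gaussMeasure, withDensity_apply _ MeasurableSet.univ, setLIntegral_univ,
    ← ofReal_integral_eq_lintegral_ofReal (gaussDensity_integrable θ)
      (Filter.Eventually.of_forall fun x => (gaussDensity_pos θ x).le),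
    gaussDensity_integral, ENNReal.ofReal_one]

lemma gaussDensity_mul_exp {n : ℕ} (θ₀ u x : EuclideanSpace ℝ (Fin n)) :
    gaussDensity θ₀ x * rexp (⟪u, x - θ₀⟫)
      = rexp (‖u‖^2/2) * gaussDensity (θ₀ + u) x := by
  unfold gaussDensity
  have hx : x - (θ₀ + u) = (x - θ₀) - u := by abel
  have key : -‖x - θ₀‖ ^ 2 / 2 + ⟪u, x - θ₀⟫ = ‖u‖^2/2 + -‖x - (θ₀ + u)‖^2/2 := by
    rw [hx, norm_sub_sq_real (x - θ₀) u, real_inner_comm u (x - θ₀)]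
    ring
  rw [mul_assoc, ← Real.exp_add, mul_left_comm, ← Real.exp_add, key]

lemma gauss_mgf {n : ℕ} (θ₀ u : EuclideanSpace ℝ (Fin n)) :
    ∫⁻ x, ENNReal.ofReal (rexp (⟪u, x - θ₀⟫)) ∂gaussMeasure θ₀
      = ENNReal.ofReal (rexp (‖u‖^2/2)) := by
  have hmf : Measurable fun x : EuclideanSpace ℝ (Fin n) =>
      ENNReal.ofReal (gaussDensity θ₀ x) :=
    ENNReal.measurable_ofReal.comp (gaussDensity_continuous θ₀).measurable
  have hmg : Measurable fun x : EuclideanSpace ℝ (Fin n) =>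
      ENNReal.ofReal (rexp (⟪u, x - θ₀⟫)) := by
    apply ENNReal.measurable_ofReal.comp
    exact (Real.continuous_exp.comp ((continuous_const.inner
      (continuous_id.sub continuous_const)))).measurable
  rw [gaussMeasure, lintegral_withDensity_eq_lintegral_mul _ hmf hmg]
  have : ∀ x : EuclideanSpace ℝ (Fin n),
      ENNReal.ofReal (gaussDensity θ₀ x) * ENNReal.ofReal (rexp (⟪u, x - θ₀⟫))
        = ENNReal.ofReal (rexp (‖u‖^2/2)) * ENNReal.ofReal (gaussDensity (θ₀ + u) x) := by
    intro x
    rw [← ENNReal.ofReal_mul (gaussDensity_pos θ₀ x).le, gaussDensity_mul_exp,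
      ENNReal.ofReal_mul (Real.exp_nonneg _)]
  simp only [Pi.mul_apply, this]
  rw [lintegral_const_mul' _ _ ENNReal.ofReal_ne_top]
  have h1 : ∫⁻ x, ENNReal.ofReal (gaussDensity (θ₀ + u) x) = 1 := by
    have := (gaussMeasure_prob (θ₀ + u)).measure_univ
    rwa [gaussMeasure, withDensity_apply _ MeasurableSet.univ, setLIntegral_univ] at this
  rw [h1, mul_one]

lemma gauss_chernoff {n : ℕ} (θ₀ v : EuclideanSpace ℝ (Fin n)) (t lam : ℝ) (hlam : 0 ≤ lam) :
    gaussMeasure θ₀ {x | ⟪v, x - θ₀⟫ < -t}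
      ≤ ENNReal.ofReal (rexp (lam^2 * ‖v‖^2/2 - lam * t)) := by
  set u := -(lam • v) with hu
  have hmeasf : Measurable fun x : EuclideanSpace ℝ (Fin n) =>
      ENNReal.ofReal (rexp (⟪u, x - θ₀⟫)) :=
    ENNReal.measurable_ofReal.comp (Real.continuous_exp.comp (continuous_const.inner
      (continuous_id.sub continuous_const))).measurable
  have hsub : {x : EuclideanSpace ℝ (Fin n) | ⟪v, x - θ₀⟫ < -t} ⊆
      {x | ENNReal.ofReal (rexp (lam * t)) ≤ ENNReal.ofReal (rexp (⟪u, x - θ₀⟫))} := by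
    intro x hx
    simp only [Set.mem_setOf_eq] at hx ⊢
    apply ENNReal.ofReal_le_ofReal
    apply Real.exp_le_exp.mpr
    have h2 : ⟪u, x - θ₀⟫ = -(lam * ⟪v, x - θ₀⟫) := by
      rw [hu, inner_neg_left, real_inner_smul_left]
    rw [h2]
    nlinarith [mul_le_mul_of_nonneg_left hx.le hlam]
  have h1 := mul_meas_ge_le_lintegral₀ (μ := gaussMeasure θ₀)
      hmeasf.aemeasurable (ENNReal.ofReal (rexp (lam * t)))
  rw [gauss_mgf θ₀ u] at h1
  have h3 : gaussMeasure θ₀ {x | ⟪v, x - θ₀⟫ < -t}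
      ≤ ENNReal.ofReal (rexp (‖u‖^2/2)) / ENNReal.ofReal (rexp (lam * t)) := by
    refine le_trans (measure_mono hsub) ?_
    rw [ENNReal.le_div_iff_mul_le (Or.inl ?h0) (Or.inl ENNReal.ofReal_ne_top)]
    · rw [mul_comm]; exact h1
    · exact (ENNReal.ofReal_pos.mpr (Real.exp_pos _)).ne'
  refine h3.trans ?_
  rw [← ENNReal.ofReal_div_of_pos (Real.exp_pos _), ← Real.exp_sub]
  apply ENNReal.ofReal_le_ofReal
  apply Real.exp_le_exp.mpr
  have h4 : ‖u‖^2 = lam^2 * ‖v‖^2 := by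
    rw [hu, norm_neg, norm_smul, mul_pow, Real.norm_eq_abs, sq_abs]
  rw [h4]

lemma gaussDensity_ratio {n : ℕ} (θ₀ θ x : EuclideanSpace ℝ (Fin n)) :
    gaussDensity θ x / gaussDensity θ₀ x
      = rexp (⟪x - θ₀, θ - θ₀⟫ - ‖θ - θ₀‖^2/2) := by
  unfold gaussDensity
  rw [mul_div_mul_left _ _ (by positivity : ((2:ℝ)*π)^(-(n:ℝ)/2) ≠ 0), ← Real.exp_sub]
  congr 1
  have hx : x - θ = (x - θ₀) - (θ - θ₀) := by abel
  rw [hx, norm_sub_sq_real (x - θ₀) (θ - θ₀)]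
  ring

lemma ofReal_integral_le {α : Type*} [MeasurableSpace α] {μ : Measure α} {f : α → ℝ}
    (hf : Integrable f μ) :
    ENNReal.ofReal (∫ x, f x ∂μ) ≤ ∫⁻ x, ENNReal.ofReal (f x) ∂μ := by
  have hmax : Integrable (fun x => max (f x) 0) μ := hf.pos_part
  calc ENNReal.ofReal (∫ x, f x ∂μ) ≤ ENNReal.ofReal (∫ x, max (f x) 0 ∂μ) := by
        apply ENNReal.ofReal_le_ofReal
        exact integral_mono hf hmax fun x => le_max_left _ _
    _ = ∫⁻ x, ENNReal.ofReal (max (f x) 0) ∂μ :=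
        ofReal_integral_eq_lintegral_ofReal hmax
          (Filter.Eventually.of_forall fun x => le_max_right _ _)
    _ = ∫⁻ x, ENNReal.ofReal (f x) ∂μ := by
        congr 1 with x
        rcases le_total 0 (f x) with h | h
        · rw [max_eq_left h]
        · rw [max_eq_right h, ENNReal.ofReal_zero,
            Eq.comm, ENNReal.ofReal_eq_zero]
          exact h

theorem evidence_lower_bound {n : ℕ}
    (Pi0 : Measure (EuclideanSpace ℝ (Fin n))) [IsProbabilityMeasure Pi0]
    (θ₀ : EuclideanSpace ℝ (Fin n)) (r : ℝ) (hr : 0 < r) :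
    ENNReal.ofReal (1 - Real.exp (-r ^ 2 / 8)) ≤
      gaussMeasure θ₀ {x |
        ENNReal.ofReal (Real.exp (-r ^ 2))
            * Pi0 {θ | ‖θ - θ₀‖ < r} ≤
          ∫⁻ θ, ENNReal.ofReal (gaussDensity θ x / gaussDensity θ₀ x) ∂Pi0} := by
  classical
  set B : Set (EuclideanSpace ℝ (Fin n)) := {θ | ‖θ - θ₀‖ < r} with hB
  have hBmeas : MeasurableSet B :=
    (isOpen_lt (continuous_id.sub continuous_const).norm continuous_const).measurableSet
  set m := (Pi0 B).toReal with hm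
  have hmB : Pi0 B = ENNReal.ofReal m := (ENNReal.ofReal_toReal (measure_ne_top _ _)).symm
  have hm0 : 0 ≤ m := ENNReal.toReal_nonneg
  have hbound : ∀ᵐ θ ∂Pi0.restrict B, ‖θ - θ₀‖ ≤ r := by
    filter_upwards [ae_restrict_mem hBmeas] with θ hθ
    exact le_of_lt hθ
  have hint1 : Integrable (fun θ => θ - θ₀) (Pi0.restrict B) :=
    Integrable.mono' (integrable_const r)
      (continuous_id.sub continuous_const).aestronglyMeasurable hbound
  set μv := ∫ θ in B, (θ - θ₀) ∂Pi0 with hμv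
  have hconstint : ∀ a : ℝ, ∫ _ in B, a ∂Pi0 = m * a := by
    intro a
    rw [integral_const, measureReal_restrict_apply_univ, hm, smul_eq_mul]; rfl
  have hμvnorm : ‖μv‖ ≤ m * r := by
    calc ‖μv‖ ≤ ∫ θ in B, ‖θ - θ₀‖ ∂Pi0 := norm_integral_le_integral_norm _
      _ ≤ ∫ _ in B, r ∂Pi0 := integral_mono_ae hint1.norm (integrable_const r) hbound
      _ = m * r := hconstint r
  have hsq : Integrable (fun θ => ‖θ - θ₀‖^2) (Pi0.restrict B) := by
    apply Integrable.mono' (integrable_const (r^2))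
      ((continuous_id.sub continuous_const).norm.pow 2).aestronglyMeasurable
    filter_upwards [hbound] with θ hθ
    show ‖‖θ - θ₀‖ ^ 2‖ ≤ r ^ 2
    rw [Real.norm_eq_abs, abs_of_nonneg (by positivity : (0:ℝ) ≤ ‖θ - θ₀‖^2)]
    exact pow_le_pow_left₀ (norm_nonneg _) hθ 2
  have hsqle : ∫ θ in B, ‖θ - θ₀‖^2 ∂Pi0 ≤ m * r^2 := by
    rw [← hconstint (r^2)]
    apply integral_mono_ae hsq (integrable_const _)
    filter_upwards [hbound] with θ hθ
    exact pow_le_pow_left₀ (norm_nonneg _) hθ 2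
  set G := {x : EuclideanSpace ℝ (Fin n) | -(m * r^2/2) ≤ ⟪μv, x - θ₀⟫} with hG
  have hGmeas : MeasurableSet G :=
    (isClosed_le continuous_const
      (continuous_const.inner (continuous_id.sub continuous_const))).measurableSet
  have hGsub : G ⊆ {x | ENNReal.ofReal (rexp (-r^2)) * Pi0 B ≤
      ∫⁻ θ, ENNReal.ofReal (gaussDensity θ x / gaussDensity θ₀ x) ∂Pi0} := by
    intro x hx
    simp only [hG, Set.mem_setOf_eq] at hx ⊢
    set c := x - θ₀ with hc
    have hinner : Integrable (fun θ => ⟪c, θ - θ₀⟫) (Pi0.restrict B) := by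
      have := ContinuousLinearMap.integrable_comp (innerSL ℝ c) hint1
      simpa using this
    have hintg : Integrable
        (fun θ => rexp (-r^2) * (1 + (⟪c, θ - θ₀⟫ - ‖θ - θ₀‖^2/2) + r^2))
        (Pi0.restrict B) := by
      apply Integrable.const_mul
      exact ((integrable_const 1).add (hinner.sub (hsq.div_const 2))).add
        (integrable_const (r^2))
    have hi1 : Integrable (fun θ => ⟪c, θ - θ₀⟫ - ‖θ - θ₀‖^2/2) (Pi0.restrict B) :=
      hinner.sub (hsq.div_const 2)
    have hi2 : Integrable (fun θ => 1 + (⟪c, θ - θ₀⟫ - ‖θ - θ₀‖^2/2)) (Pi0.restrict B) :=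
      (integrable_const 1).add hi1
    have hsum : ∫ θ in B, rexp (-r^2) * (1 + (⟪c, θ - θ₀⟫ - ‖θ - θ₀‖^2/2) + r^2) ∂Pi0
        = rexp (-r^2) * ((m * 1 + (⟪c, μv⟫ - (∫ θ in B, ‖θ - θ₀‖^2 ∂Pi0)/2)) + m * r^2) := by
      rw [integral_const_mul, integral_add hi2 (integrable_const (r^2)),
        integral_add (integrable_const 1) hi1,
        integral_sub hinner (hsq.div_const 2), hconstint 1, hconstint (r^2),
        integral_div, integral_inner hint1 c]
    calc ENNReal.ofReal (rexp (-r^2)) * Pi0 B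
        = ENNReal.ofReal (rexp (-r^2) * m) := by
          rw [hmB, ← ENNReal.ofReal_mul (Real.exp_nonneg _)]
      _ ≤ ENNReal.ofReal (∫ θ in B,
            rexp (-r^2) * (1 + (⟪c, θ - θ₀⟫ - ‖θ - θ₀‖^2/2) + r^2) ∂Pi0) := by
          apply ENNReal.ofReal_le_ofReal
          rw [hsum]
          have h1 : -(m * r^2/2) ≤ ⟪c, μv⟫ := by rw [real_inner_comm]; exact hx
          nlinarith [Real.exp_pos (-r^2), hsqle]
      _ ≤ ∫⁻ θ in B, ENNReal.ofReal
            (rexp (-r^2) * (1 + (⟪c, θ - θ₀⟫ - ‖θ - θ₀‖^2/2) + r^2)) ∂Pi0 :=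
          ofReal_integral_le hintg
      _ ≤ ∫⁻ θ in B, ENNReal.ofReal (gaussDensity θ x / gaussDensity θ₀ x) ∂Pi0 := by
          apply lintegral_mono
          intro θ
          apply ENNReal.ofReal_le_ofReal
          rw [gaussDensity_ratio θ₀ θ x, ← hc]
          set y := ⟪c, θ - θ₀⟫ - ‖θ - θ₀‖^2/2 with hy
          have h2 := Real.add_one_le_exp (y + r^2)
          have h3 : rexp (y + r^2) = rexp y * rexp (r^2) := Real.exp_add _ _
          have h4 : rexp (-r^2) * rexp (r^2) = 1 := by
            rw [← Real.exp_add]; simp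
          nlinarith [Real.exp_pos (-r^2), Real.exp_pos (r^2), Real.exp_pos y]
      _ ≤ ∫⁻ θ, ENNReal.ofReal (gaussDensity θ x / gaussDensity θ₀ x) ∂Pi0 :=
          setLIntegral_le_lintegral _ _
  have htail : gaussMeasure θ₀ Gᶜ ≤ ENNReal.ofReal (rexp (-r^2/8)) := by
    have hGc : Gᶜ = {x : EuclideanSpace ℝ (Fin n) | ⟪μv, x - θ₀⟫ < -(m * r^2/2)} := by
      ext x; simp [hG, not_le]
    rw [hGc]
    rcases eq_or_ne μv 0 with h0 | h0
    · have hempty : {x : EuclideanSpace ℝ (Fin n) | ⟪μv, x - θ₀⟫ < -(m * r^2/2)} = ∅ := by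
        ext x
        simp only [Set.mem_setOf_eq, Set.mem_empty_iff_false, iff_false, not_lt, h0,
          inner_zero_left]
        nlinarith
      rw [hempty]
      simp
    · have hmpos : 0 < m := by
        rcases lt_or_eq_of_le hm0 with h | h
        · exact h
        · exfalso
          apply h0
          apply norm_le_zero_iff.mp
          calc ‖μv‖ ≤ m * r := hμvnorm
            _ = 0 := by rw [← h]; ring
      have hch := gauss_chernoff θ₀ μv (m * r^2/2) (1/(2*m)) (by positivity)
      refine hch.trans (ENNReal.ofReal_le_ofReal (Real.exp_le_exp.mpr ?_))
      have hkey : (1/(2*m)) * m = 1/2 := by field_simp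
      have h1 : ‖μv‖^2 ≤ (m*r)^2 := by nlinarith [norm_nonneg μv]
      have h2 : (1/(2*m))^2 * ‖μv‖^2 ≤ (1/(2*m))^2 * (m*r)^2 :=
        mul_le_mul_of_nonneg_left h1 (sq_nonneg _)
      have h3 : (1/(2*m))^2 * (m*r)^2 = r^2/4 := by
        rw [mul_pow, ← mul_assoc]
        rw [show (1/(2*m))^2 * m^2 = ((1/(2*m)) * m)^2 by ring, hkey]
        ring
      have h4 : (1/(2*m)) * (m * r^2/2) = r^2/4 := by
        rw [show (1/(2*m)) * (m * r^2/2) = ((1/(2*m)) * m) * (r^2/2) by ring, hkey]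
        ring
      nlinarith
  have hGtot : gaussMeasure θ₀ G + gaussMeasure θ₀ Gᶜ = 1 :=
    (measure_add_measure_compl hGmeas).trans measure_univ
  have hexp1 : rexp (-r^2/8) ≤ 1 := Real.exp_le_one_iff.mpr (by nlinarith)
  calc ENNReal.ofReal (1 - rexp (-r^2/8))
      = 1 - ENNReal.ofReal (rexp (-r^2/8)) := by
        rw [ENNReal.ofReal_sub _ (Real.exp_nonneg _), ENNReal.ofReal_one]
    _ ≤ 1 - gaussMeasure θ₀ Gᶜ := tsub_le_tsub_left htail 1
    _ ≤ gaussMeasure θ₀ G := by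
        rw [tsub_le_iff_right]
        exact hGtot.ge
    _ ≤ _ := measure_mono hGsub
end

section
/- With π_n(p) = C(2n−p, n)/C(2n+1, n) for p ∈ {0,…,n}, π_n is a probability distribution (i.e., Σ_{p=0}^n C(2n−p,n) = C(2n+1,n)), and moreover π_n(p) ≥ (1 − (p+1)/(n+2))^n for all 0 ≤ p ≤ n. -/
open Finset

lemma asc_prod (a k : ℕ) : a.ascFactorial k = ∏ i ∈ Finset.range k, (a + i) := by
  induction k with
  | zero => simp [Nat.ascFactorial]
  | succ k ih => rw [Nat.ascFactorial_succ, Finset.prod_range_succ, ih, mul_comm]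

theorem beta_binomial_normalization_and_lower_bound (n : ℕ) (hn : 1 ≤ n) :
    (∑ p ∈ Finset.range (n + 1), (2 * n - p).choose n) = (2 * n + 1).choose n ∧
    ∀ p : ℕ, p ≤ n →
      (1 - ((p : ℝ) + 1) / ((n : ℝ) + 2)) ^ n ≤
        ((2 * n - p).choose n : ℝ) / ((2 * n + 1).choose n : ℝ) := by
  constructor
  · have h := Finset.sum_range_reflect (fun i => (i + n).choose n) (n + 1)
    have h2 : ∀ p ∈ Finset.range (n + 1),
        (n + 1 - 1 - p + n).choose n = (2 * n - p).choose n := by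
      intro p hp
      simp only [Finset.mem_range] at hp
      congr 1
      omega
    rw [Finset.sum_congr rfl h2] at h
    rw [h, Nat.sum_range_add_choose]
    have : n + n + 1 = 2 * n + 1 := by omega
    rw [this]
    have := Nat.choose_symm (n := 2 * n + 1) (k := n) (by omega)
    rw [show 2 * n + 1 - n = n + 1 by omega] at this
    exact this.symm.symm
  · intro p hp
    set q := n - p with hq
    have hpq : 2 * n - p = q + n := by omega
    have hcast : ((p : ℝ) + 1) = (n : ℝ) + 2 - ((q : ℝ) + 1) := by
      have : (q : ℝ) = (n : ℝ) - (p : ℝ) := by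
        rw [hq]; push_cast [Nat.cast_sub hp]; ring
      rw [this]; ring
    have key1 : (n.factorial : ℝ) * ((2 * n - p).choose n : ℝ) = (q + 1).ascFactorial n := by
      have := Nat.ascFactorial_eq_factorial_mul_choose q n
      rw [hpq]
      exact_mod_cast this.symm
    have key2 : (n.factorial : ℝ) * ((2 * n + 1).choose n : ℝ) = (n + 2).ascFactorial n := by
      have := Nat.ascFactorial_eq_factorial_mul_choose (n + 1) n
      rw [show n + 1 + n = 2 * n + 1 by omega] at this
      exact_mod_cast (Nat.cast_inj.mpr this.symm)
    have hfac : (0:ℝ) < n.factorial := by exact_mod_cast n.factorial_pos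
    have hden : (0:ℝ) < ((2 * n + 1).choose n : ℝ) := by
      exact_mod_cast Nat.choose_pos (by omega)
    have hratio : ((2 * n - p).choose n : ℝ) / ((2 * n + 1).choose n : ℝ) =
        ∏ i ∈ Finset.range n, (((q : ℝ) + 1 + i) / ((n : ℝ) + 2 + i)) := by
      rw [Finset.prod_div_distrib]
      have e1 : (∏ i ∈ Finset.range n, ((q : ℝ) + 1 + i)) = ((q + 1).ascFactorial n : ℝ) := by
        rw [asc_prod]; push_cast; rfl
      have e2 : (∏ i ∈ Finset.range n, ((n : ℝ) + 2 + i)) = (((n + 2)).ascFactorial n : ℝ) := by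
        rw [asc_prod]; push_cast; rfl
      rw [e1, e2, ← key1, ← key2]
      rw [mul_div_mul_left _ _ (ne_of_gt hfac)]
    rw [hratio, hcast]
    have hbase : (1 - ((n:ℝ) + 2 - ((q:ℝ)+1)) / ((n : ℝ) + 2)) = ((q:ℝ)+1)/((n:ℝ)+2) := by
      field_simp
      ring
    have hpow : (((q:ℝ)+1)/((n:ℝ)+2))^n = ∏ _i ∈ Finset.range n, ((q:ℝ)+1)/((n:ℝ)+2) := by
      rw [Finset.prod_const, Finset.card_range]
    rw [hbase, hpow]
    apply Finset.prod_le_prod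
    · intro i _
      positivity
    · intro i _
      have hqn : (q : ℝ) ≤ n := by exact_mod_cast Nat.sub_le n p
      rw [div_le_div_iff₀ (by positivity) (by positivity)]
      nlinarith [Nat.cast_nonneg (α := ℝ) i, Nat.cast_nonneg (α := ℝ) q]
end

section
/- Let π_n(k) ∝ exp(−k·(log k)^a) for k ∈ {1,…,n} with a ≥ 1, and let p_n → ∞ with (3p_n/4)^{2^{1/a}} ≥ ne and log(3p_n/4) ≥ 2^{−1/a}·log p_n. Then (π_n(3p_n/4)/π_n(p_n/4)) · C(n, p_n/4) ≤ exp(−(p_n/8)·(log p_n)^a) for all sufficiently large n. -/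
set_option maxHeartbeats 1000000


open Real Filter

theorem fast_decreasing_prior_ratio_bound (a : ℝ) (ha : 1 ≤ a) (p : ℕ → ℕ)
    (hdiv : ∀ n, 4 ∣ p n)
    (htop : Filter.Tendsto p Filter.atTop Filter.atTop)
    (hcond1 : ∀ n : ℕ, (n : ℝ) * Real.exp 1 ≤ (3 * (p n : ℝ) / 4) ^ ((2 : ℝ) ^ (1 / a)))
    (hcond2 : ∀ n : ℕ, (2 : ℝ) ^ (-(1 / a)) * Real.log (p n) ≤ Real.log (3 * (p n : ℝ) / 4)) :
    ∀ᶠ n : ℕ in Filter.atTop,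
      Real.exp (-(3 * (p n : ℝ) / 4) * Real.log (3 * (p n : ℝ) / 4) ^ a)
          / Real.exp (-((p n : ℝ) / 4) * Real.log ((p n : ℝ) / 4) ^ a)
          * (n.choose (p n / 4) : ℝ) ≤
        Real.exp (-((p n : ℝ) / 8) * Real.log (p n) ^ a) := by
  have ha0 : (0:ℝ) < a := lt_of_lt_of_le one_pos ha
  filter_upwards [htop.eventually_ge_atTop 12, eventually_ge_atTop 1] with n hp hn
  set P : ℝ := (p n : ℝ) with hPdef
  have hP : (12:ℝ) ≤ P := by rw [hPdef]; exact_mod_cast hp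
  have hPpos : (0:ℝ) < P := by linarith
  set k : ℕ := p n / 4 with hkdef
  obtain ⟨m, hm⟩ := hdiv n
  have hkm : k = m := by rw [hkdef, hm]; omega
  have hkR : (k : ℝ) = P / 4 := by
    rw [hkm]; rw [hPdef]; rw [hm]; push_cast; ring
  have hkpos : (0:ℝ) < (k:ℝ) := by rw [hkR]; linarith
  have hnpos : (0:ℝ) < (n:ℝ) := by exact_mod_cast hn
  set L1 : ℝ := Real.log (P / 4) with hL1def
  set L3 : ℝ := Real.log (3 * P / 4) with hL3def
  set Lp : ℝ := Real.log P with hLpdef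
  have hP4pos : (0:ℝ) < P / 4 := by linarith
  have h3P4pos : (0:ℝ) < 3 * P / 4 := by linarith
  have hL1one : 1 ≤ L1 := by
    rw [hL1def, Real.le_log_iff_exp_le hP4pos]
    have := Real.exp_one_lt_d9
    linarith
  have hL13 : L1 ≤ L3 := Real.log_le_log hP4pos (by linarith)
  have hLp0 : 0 ≤ Lp := Real.log_nonneg (by linarith)
  have hpow2 : (0:ℝ) < (2:ℝ) ^ (1/a) := Real.rpow_pos_of_pos two_pos _
  have hpow2one : (1:ℝ) ≤ (2:ℝ) ^ (1/a) :=
    Real.one_le_rpow one_le_two (by positivity)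
  set u : ℝ := (2:ℝ) ^ (1/a) * L3 with hudef
  have hL1u : L1 ≤ u := by
    have : L3 ≤ u := by
      rw [hudef]; nlinarith [hL13, hL1one]
    linarith
  have hupos : (0:ℝ) < u := by nlinarith
  -- u ^ a = 2 * L3 ^ a
  have hL3pos : (0:ℝ) < L3 := by linarith
  have hua : u ^ a = 2 * L3 ^ a := by
    rw [hudef, Real.mul_rpow (le_of_lt hpow2) (le_of_lt hL3pos),
      ← Real.rpow_mul (by norm_num : (0:ℝ) ≤ 2), one_div,
      inv_mul_cancel₀ (ne_of_gt ha0), Real.rpow_one]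
  -- log n + 1 ≤ u
  have hne : Real.log n + 1 ≤ u := by
    have h := hcond1 n
    have hlog := Real.log_le_log (by positivity) h
    rw [Real.log_mul (ne_of_gt hnpos) (ne_of_gt (Real.exp_pos 1)), Real.log_exp,
      Real.log_rpow h3P4pos] at hlog
    exact hlog
  -- Lp ^ a ≤ 2 * L3 ^ a
  have hLpa : Lp ^ a ≤ 2 * L3 ^ a := by
    have h := hcond2 n
    have hx0 : (0:ℝ) ≤ (2:ℝ) ^ (-(1/a)) * Lp := by positivity
    have hr := Real.rpow_le_rpow hx0 h (le_of_lt ha0)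
    rw [Real.mul_rpow (by positivity) hLp0, ← Real.rpow_mul (by norm_num : (0:ℝ) ≤ 2)] at hr
    have : -(1/a) * a = -1 := by field_simp
    rw [this, Real.rpow_neg_one] at hr
    nlinarith [Real.rpow_natCast (2:ℝ) 1]
  -- key monotonicity : L1 ^ a - L1 ≤ u ^ a - u
  have hkey : L1 ^ a - L1 ≤ u ^ a - u := by
    have hL1pos : (0:ℝ) < L1 := by linarith
    have h1 : L1 ^ (a - 1) ≤ u ^ (a - 1) :=
      Real.rpow_le_rpow (le_of_lt hL1pos) hL1u (by linarith)
    have h2 : (1:ℝ) ≤ L1 ^ (a - 1) := Real.one_le_rpow hL1one (by linarith)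
    have hu_split : u ^ a = u ^ (a - 1) * u := by
      have h := Real.rpow_add hupos (a - 1) 1
      rw [sub_add_cancel, Real.rpow_one] at h
      exact h
    have hL1_split : L1 ^ a = L1 ^ (a - 1) * L1 := by
      have h := Real.rpow_add hL1pos (a - 1) 1
      rw [sub_add_cancel, Real.rpow_one] at h
      exact h
    rw [hu_split, hL1_split]
    nlinarith [h1, h2, hL1u, hL1pos]
  -- binomial coefficient bound
  have hC : (n.choose k : ℝ) ≤ Real.exp ((k:ℝ) * Real.log n + k - (k:ℝ) * L1) := by
    have h1 : (n.choose k : ℝ) ≤ ((n:ℝ) ^ k) / (Nat.factorial k : ℝ) := by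
      have := Nat.choose_le_pow_div (α := ℝ) k n
      push_cast at this ⊢
      exact this
    have h2 : ((k:ℝ)) ^ k / (Nat.factorial k : ℝ) ≤ Real.exp k :=
      Real.pow_div_factorial_le_exp (x := (k:ℝ)) (le_of_lt hkpos) k
    have hfacpos : (0:ℝ) < (Nat.factorial k : ℝ) := by exact_mod_cast (Nat.factorial_pos k)
    have hkk : ((k:ℝ)) ^ k = Real.exp ((k:ℝ) * L1) := by
      rw [hL1def, ← hkR, Real.exp_nat_mul, Real.exp_log hkpos]
    have hnn : ((n:ℝ)) ^ k = Real.exp ((k:ℝ) * Real.log n) := by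
      rw [Real.exp_nat_mul, Real.exp_log hnpos]
    have hk' : Real.exp ((k:ℝ) * L1) ≤ (Nat.factorial k : ℝ) * Real.exp k := by
      rw [← hkk]
      rw [div_le_iff₀ hfacpos] at h2
      linarith [h2]
    have hexpcancel : Real.exp (k:ℝ) * Real.exp (-(k:ℝ)) = 1 := by
      rw [← Real.exp_add]; simp
    have h3 : ((n:ℝ) ^ k) / (Nat.factorial k : ℝ) ≤
        Real.exp ((k:ℝ) * Real.log n + k - (k:ℝ) * L1) := by
      rw [div_le_iff₀ hfacpos, hnn]
      calc Real.exp ((k:ℝ) * Real.log n)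
          = Real.exp ((k:ℝ) * Real.log n + k - (k:ℝ) * L1) * Real.exp ((k:ℝ) * L1)
              * Real.exp (-(k:ℝ)) := by
            rw [← Real.exp_add, ← Real.exp_add]; ring_nf
        _ ≤ Real.exp ((k:ℝ) * Real.log n + k - (k:ℝ) * L1) * ((Nat.factorial k : ℝ) * Real.exp k)
              * Real.exp (-(k:ℝ)) := by
            refine mul_le_mul_of_nonneg_right ?_ (le_of_lt (Real.exp_pos _))
            exact mul_le_mul_of_nonneg_left hk' (le_of_lt (Real.exp_pos _))
        _ = Real.exp ((k:ℝ) * Real.log n + k - (k:ℝ) * L1) * (Nat.factorial k : ℝ)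
              * (Real.exp (k:ℝ) * Real.exp (-(k:ℝ))) := by ring
        _ = Real.exp ((k:ℝ) * Real.log n + k - (k:ℝ) * L1) * (Nat.factorial k : ℝ) := by
            rw [hexpcancel, mul_one]
    exact le_trans h1 h3
  -- now combine
  rw [div_mul_eq_mul_div, div_le_iff₀ (Real.exp_pos _), ← Real.exp_add]
  calc Real.exp (-(3 * P / 4) * L3 ^ a) * (n.choose k : ℝ)
      ≤ Real.exp (-(3 * P / 4) * L3 ^ a) *
          Real.exp ((k:ℝ) * Real.log n + k - (k:ℝ) * L1) := by
        exact mul_le_mul_of_nonneg_left hC (le_of_lt (Real.exp_pos _))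
    _ = Real.exp (-(3 * P / 4) * L3 ^ a + ((k:ℝ) * Real.log n + k - (k:ℝ) * L1)) := by
        rw [← Real.exp_add]
    _ ≤ Real.exp (-(P / 8) * Lp ^ a + -(P / 4) * L1 ^ a) := by
        rw [Real.exp_le_exp, hkR]
        nlinarith [mul_le_mul_of_nonneg_left hkey (by linarith : (0:ℝ) ≤ P/4),
          mul_le_mul_of_nonneg_left hne (by linarith : (0:ℝ) ≤ P/4),
          mul_le_mul_of_nonneg_left hLpa (by linarith : (0:ℝ) ≤ P/8)]
end
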